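/- Let ω > 0, r₁, r₂ > 0, A₁, A₂ > 0, and set X₀ = A₁A₂ + r₁A₂ + r₂A₁. Then for all z₁ > -A₁ and z₂ > -A₂: log(ω + (r₁r₂/((A₁+z₁)(A₂+z₂)))/(1 + r₁/(A₁+z₁) + r₂/(A₂+z₂))) ≥ log(ω + (r₁r₂/(A₁A₂))/(1 + r₁/A₁ + r₂/A₂)) − (1/X₀ − 1/(X₀ + r₁r₂/ω))·[(A₂+r₂)z₁ + (A₁+r₁)z₂]. -/

import Mathlib

open Real Set

/-- quadratic `X(t)` along the segment. -/
noncomputable def Xq (r₁ r₂ A₁ A₂ z₁ z₂ t : ℝ) : ℝ :=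
  (A₁ + t*z₁) * (A₂ + t*z₂) + r₁ * (A₂ + t*z₂) + r₂ * (A₁ + t*z₁)

/-- derivative of `X`. -/
noncomputable def Vq (r₁ r₂ A₁ A₂ z₁ z₂ t : ℝ) : ℝ :=
  z₁ * (A₂ + t*z₂) + (A₁ + t*z₁) * z₂ + r₁ * z₂ + r₂ * z₁

noncomputable def Phiq (ω r₁ r₂ A₁ A₂ z₁ z₂ t : ℝ) : ℝ :=
  Real.log (ω * Xq r₁ r₂ A₁ A₂ z₁ z₂ t + r₁*r₂) - Real.log (Xq r₁ r₂ A₁ A₂ z₁ z₂ t)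

noncomputable def Dq (ω r₁ r₂ A₁ A₂ z₁ z₂ t : ℝ) : ℝ :=
  (ω / (ω * Xq r₁ r₂ A₁ A₂ z₁ z₂ t + r₁*r₂) - 1 / (Xq r₁ r₂ A₁ A₂ z₁ z₂ t)) *
    Vq r₁ r₂ A₁ A₂ z₁ z₂ t

noncomputable def Eq2 (ω r₁ r₂ A₁ A₂ z₁ z₂ t : ℝ) : ℝ :=
  ((Vq r₁ r₂ A₁ A₂ z₁ z₂ t)^2 * (2*ω*Xq r₁ r₂ A₁ A₂ z₁ z₂ t + r₁*r₂)
     - 2*(z₁*z₂) * Xq r₁ r₂ A₁ A₂ z₁ z₂ t * (ω * Xq r₁ r₂ A₁ A₂ z₁ z₂ t + r₁*r₂))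
  * (r₁*r₂) / ((Xq r₁ r₂ A₁ A₂ z₁ z₂ t)^2 * (ω * Xq r₁ r₂ A₁ A₂ z₁ z₂ t + r₁*r₂)^2)

lemma affine_pos {A z t : ℝ} (hA : 0 < A) (h : 0 < A + z) (ht0 : 0 ≤ t) (ht1 : t ≤ 1) :
    0 < A + t * z := by
  rcases le_or_gt 0 z with hz | hz
  · nlinarith
  · nlinarith [mul_nonneg (sub_nonneg.2 ht1) (neg_nonneg.2 hz.le)]

lemma Xq_pos {r₁ r₂ A₁ A₂ z₁ z₂ : ℝ} (hr₁ : 0 < r₁) (hr₂ : 0 < r₂)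
    (hA₁ : 0 < A₁) (hA₂ : 0 < A₂) (h1 : 0 < A₁ + z₁) (h2 : 0 < A₂ + z₂)
    {t : ℝ} (ht0 : 0 ≤ t) (ht1 : t ≤ 1) : 0 < Xq r₁ r₂ A₁ A₂ z₁ z₂ t := by
  have ha := affine_pos hA₁ h1 ht0 ht1
  have hb := affine_pos hA₂ h2 ht0 ht1
  unfold Xq
  have := mul_pos ha hb
  have := mul_pos hr₁ hb
  have := mul_pos hr₂ ha
  linarith

lemma Xq_hasDerivAt (r₁ r₂ A₁ A₂ z₁ z₂ t : ℝ) :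
    HasDerivAt (Xq r₁ r₂ A₁ A₂ z₁ z₂) (Vq r₁ r₂ A₁ A₂ z₁ z₂ t) t := by
  have h1 : HasDerivAt (fun s : ℝ => A₁ + s*z₁) z₁ t := by
    simpa using ((hasDerivAt_id t).mul_const z₁).const_add A₁
  have h2 : HasDerivAt (fun s : ℝ => A₂ + s*z₂) z₂ t := by
    simpa using ((hasDerivAt_id t).mul_const z₂).const_add A₂
  have H := ((h1.mul h2).add (h2.const_mul r₁)).add (h1.const_mul r₂)
  exact H

lemma Vq_hasDerivAt (r₁ r₂ A₁ A₂ z₁ z₂ t : ℝ) :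
    HasDerivAt (Vq r₁ r₂ A₁ A₂ z₁ z₂) (2*(z₁*z₂)) t := by
  have h1 : HasDerivAt (fun s : ℝ => A₁ + s*z₁) z₁ t := by
    simpa using ((hasDerivAt_id t).mul_const z₁).const_add A₁
  have h2 : HasDerivAt (fun s : ℝ => A₂ + s*z₂) z₂ t := by
    simpa using ((hasDerivAt_id t).mul_const z₂).const_add A₂
  have H := (((h2.const_mul z₁).add (h1.mul_const z₂)).add_const (r₁*z₂)).add_const (r₂*z₁)
  refine H.congr_deriv ?_
  ring

lemma Yq_pos {ω r₁ r₂ A₁ A₂ z₁ z₂ t : ℝ} (hω : 0 < ω) (hr₁ : 0 < r₁) (hr₂ : 0 < r₂)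
    (hX : 0 < Xq r₁ r₂ A₁ A₂ z₁ z₂ t) : 0 < ω * Xq r₁ r₂ A₁ A₂ z₁ z₂ t + r₁*r₂ := by
  have := mul_pos hω hX
  have := mul_pos hr₁ hr₂
  linarith

lemma Phiq_hasDerivAt {ω r₁ r₂ A₁ A₂ z₁ z₂ t : ℝ} (hω : 0 < ω) (hr₁ : 0 < r₁)
    (hr₂ : 0 < r₂) (hX : 0 < Xq r₁ r₂ A₁ A₂ z₁ z₂ t) :
    HasDerivAt (Phiq ω r₁ r₂ A₁ A₂ z₁ z₂) (Dq ω r₁ r₂ A₁ A₂ z₁ z₂ t) t := by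
  have hY := Yq_pos hω hr₁ hr₂ hX
  have l1 : HasDerivAt (fun s => Real.log (ω * Xq r₁ r₂ A₁ A₂ z₁ z₂ s + r₁*r₂))
      ((ω * Vq r₁ r₂ A₁ A₂ z₁ z₂ t) / (ω * Xq r₁ r₂ A₁ A₂ z₁ z₂ t + r₁*r₂)) t :=
    (((Xq_hasDerivAt r₁ r₂ A₁ A₂ z₁ z₂ t).const_mul ω).add_const (r₁*r₂)).log hY.ne'
  have l2 : HasDerivAt (fun s => Real.log (Xq r₁ r₂ A₁ A₂ z₁ z₂ s))
      (Vq r₁ r₂ A₁ A₂ z₁ z₂ t / Xq r₁ r₂ A₁ A₂ z₁ z₂ t) t :=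
    (Xq_hasDerivAt r₁ r₂ A₁ A₂ z₁ z₂ t).log hX.ne'
  have H := l1.sub l2
  refine H.congr_deriv ?_
  unfold Dq; ring

lemma Dq_hasDerivAt {ω r₁ r₂ A₁ A₂ z₁ z₂ t : ℝ} (hω : 0 < ω) (hr₁ : 0 < r₁)
    (hr₂ : 0 < r₂) (hX : 0 < Xq r₁ r₂ A₁ A₂ z₁ z₂ t) :
    HasDerivAt (Dq ω r₁ r₂ A₁ A₂ z₁ z₂) (Eq2 ω r₁ r₂ A₁ A₂ z₁ z₂ t) t := by
  have hY := Yq_pos hω hr₁ hr₂ hX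
  have d1 : HasDerivAt (fun s => ω / (ω * Xq r₁ r₂ A₁ A₂ z₁ z₂ s + r₁*r₂))
      ((0 * (ω * Xq r₁ r₂ A₁ A₂ z₁ z₂ t + r₁*r₂) - ω * (ω * Vq r₁ r₂ A₁ A₂ z₁ z₂ t))
        / (ω * Xq r₁ r₂ A₁ A₂ z₁ z₂ t + r₁*r₂)^2) t :=
    (hasDerivAt_const t ω).div
      (((Xq_hasDerivAt r₁ r₂ A₁ A₂ z₁ z₂ t).const_mul ω).add_const (r₁*r₂)) hY.ne'
  have d2 : HasDerivAt (fun s => 1 / Xq r₁ r₂ A₁ A₂ z₁ z₂ s)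
      ((0 * Xq r₁ r₂ A₁ A₂ z₁ z₂ t - 1 * Vq r₁ r₂ A₁ A₂ z₁ z₂ t)
        / (Xq r₁ r₂ A₁ A₂ z₁ z₂ t)^2) t :=
    (hasDerivAt_const t (1:ℝ)).div (Xq_hasDerivAt r₁ r₂ A₁ A₂ z₁ z₂ t) hX.ne'
  have H := (d1.sub d2).mul (Vq_hasDerivAt r₁ r₂ A₁ A₂ z₁ z₂ t)
  refine H.congr_deriv ?_
  unfold Eq2
  simp only [Pi.sub_apply]
  field_simp
  ring

lemma Eq2_nonneg {ω r₁ r₂ A₁ A₂ z₁ z₂ t : ℝ} (hω : 0 < ω) (hr₁ : 0 < r₁)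
    (hr₂ : 0 < r₂) (hX : 0 < Xq r₁ r₂ A₁ A₂ z₁ z₂ t) :
    0 ≤ Eq2 ω r₁ r₂ A₁ A₂ z₁ z₂ t := by
  have hY := Yq_pos hω hr₁ hr₂ hX
  unfold Eq2
  apply div_nonneg _ (by positivity)
  apply mul_nonneg _ (by positivity)
  set X := Xq r₁ r₂ A₁ A₂ z₁ z₂ t with hXdef
  set V := Vq r₁ r₂ A₁ A₂ z₁ z₂ t with hVdef
  rcases le_or_gt (z₁*z₂) 0 with hp | hp
  · have t1 : 0 ≤ V^2 * (2*ω*X + r₁*r₂) := mul_nonneg (sq_nonneg _) (by nlinarith)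
    have t2 : 0 ≤ -(z₁*z₂) * (2 * X * (ω*X + r₁*r₂)) :=
      mul_nonneg (by linarith) (by positivity)
    nlinarith [t1, t2]
  · have key : 0 ≤ (2*ω*X + r₁*r₂) * (z₁*(A₂ + t*z₂ + r₂) - (A₁ + t*z₁ + r₁)*z₂)^2 :=
      mul_nonneg (by nlinarith) (sq_nonneg _)
    have h2 : 0 ≤ (z₁*z₂) * (6*ω*X^2 + 8*ω*X*(r₁*r₂) + 2*X*(r₁*r₂) + 4*(r₁*r₂)^2) := by
      apply mul_nonneg hp.le
      have h3 : 0 < r₁ * r₂ := mul_pos hr₁ hr₂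
      nlinarith [mul_pos hω (mul_pos hX hX), mul_pos (mul_pos hω hX) h3, mul_pos hX h3]
    have hid : V^2 * (2*ω*X + r₁*r₂) - 2*(z₁*z₂) * X * (ω*X + r₁*r₂)
        = (2*ω*X + r₁*r₂) * (z₁*(A₂ + t*z₂ + r₂) - (A₁ + t*z₁ + r₁)*z₂)^2
          + (z₁*z₂) * (6*ω*X^2 + 8*ω*X*(r₁*r₂) + 2*X*(r₁*r₂) + 4*(r₁*r₂)^2) := by
      rw [hXdef, hVdef]; unfold Xq Vq; ring
    linarith [key, h2, hid.ge, hid.le]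

lemma main_ineq {ω r₁ r₂ A₁ A₂ : ℝ} (hω : 0 < ω) (hr₁ : 0 < r₁) (hr₂ : 0 < r₂)
    (hA₁ : 0 < A₁) (hA₂ : 0 < A₂) (z₁ z₂ : ℝ) (h1 : 0 < A₁ + z₁) (h2 : 0 < A₂ + z₂) :
    Phiq ω r₁ r₂ A₁ A₂ z₁ z₂ 1 ≥ Phiq ω r₁ r₂ A₁ A₂ z₁ z₂ 0 + Dq ω r₁ r₂ A₁ A₂ z₁ z₂ 0 := by
  have hXpos : ∀ t ∈ Icc (0:ℝ) 1, 0 < Xq r₁ r₂ A₁ A₂ z₁ z₂ t :=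
    fun t ht => Xq_pos hr₁ hr₂ hA₁ hA₂ h1 h2 ht.1 ht.2
  have hphid : ∀ t ∈ Icc (0:ℝ) 1, HasDerivAt (Phiq ω r₁ r₂ A₁ A₂ z₁ z₂)
      (Dq ω r₁ r₂ A₁ A₂ z₁ z₂ t) t :=
    fun t ht => Phiq_hasDerivAt hω hr₁ hr₂ (hXpos t ht)
  have hcont : ContinuousOn (Phiq ω r₁ r₂ A₁ A₂ z₁ z₂) (Icc 0 1) :=
    fun t ht => (hphid t ht).continuousAt.continuousWithinAt
  obtain ⟨c, hc, hceq⟩ := exists_hasDerivAt_eq_slope (Phiq ω r₁ r₂ A₁ A₂ z₁ z₂)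
    (Dq ω r₁ r₂ A₁ A₂ z₁ z₂) one_pos hcont
    (fun t ht => hphid t ⟨ht.1.le, ht.2.le⟩)
  have hsub : ∀ t ∈ Icc (0:ℝ) c, t ∈ Icc (0:ℝ) 1 :=
    fun t ht => ⟨ht.1, ht.2.trans hc.2.le⟩
  have hDd : ∀ t ∈ Icc (0:ℝ) c, HasDerivAt (Dq ω r₁ r₂ A₁ A₂ z₁ z₂)
      (Eq2 ω r₁ r₂ A₁ A₂ z₁ z₂ t) t :=
    fun t ht => Dq_hasDerivAt hω hr₁ hr₂ (hXpos t (hsub t ht))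
  have hcontD : ContinuousOn (Dq ω r₁ r₂ A₁ A₂ z₁ z₂) (Icc 0 c) :=
    fun t ht => (hDd t ht).continuousAt.continuousWithinAt
  obtain ⟨d, hd, hdeq⟩ := exists_hasDerivAt_eq_slope (Dq ω r₁ r₂ A₁ A₂ z₁ z₂)
    (Eq2 ω r₁ r₂ A₁ A₂ z₁ z₂) hc.1 hcontD
    (fun t ht => hDd t ⟨ht.1.le, ht.2.le⟩)
  have hEd : 0 ≤ Eq2 ω r₁ r₂ A₁ A₂ z₁ z₂ d :=
    Eq2_nonneg hω hr₁ hr₂ (hXpos d (hsub d ⟨hd.1.le, hd.2.le⟩))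
  rw [hdeq] at hEd
  have hc0 : (0:ℝ) < c - 0 := by linarith [hc.1]
  have hDge : Dq ω r₁ r₂ A₁ A₂ z₁ z₂ 0 ≤ Dq ω r₁ r₂ A₁ A₂ z₁ z₂ c := by
    have := mul_nonneg hEd hc0.le
    rw [div_mul_cancel₀ _ hc0.ne'] at this
    linarith
  have : Dq ω r₁ r₂ A₁ A₂ z₁ z₂ c
      = Phiq ω r₁ r₂ A₁ A₂ z₁ z₂ 1 - Phiq ω r₁ r₂ A₁ A₂ z₁ z₂ 0 := by
    rw [hceq]; norm_num
  linarith

theorem stmt_9 (ω r₁ r₂ A₁ A₂ : ℝ) (hω : 0 < ω) (hr₁ : 0 < r₁) (hr₂ : 0 < r₂)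
    (hA₁ : 0 < A₁) (hA₂ : 0 < A₂)
    (X₀ : ℝ) (hX₀ : X₀ = A₁ * A₂ + r₁ * A₂ + r₂ * A₁) :
    ∀ z₁ z₂ : ℝ, -A₁ < z₁ → -A₂ < z₂ →
      Real.log (ω + (r₁ * r₂ / ((A₁ + z₁) * (A₂ + z₂))) /
          (1 + r₁ / (A₁ + z₁) + r₂ / (A₂ + z₂))) ≥
        Real.log (ω + (r₁ * r₂ / (A₁ * A₂)) / (1 + r₁ / A₁ + r₂ / A₂)) -
          (1 / X₀ - 1 / (X₀ + r₁ * r₂ / ω)) * ((A₂ + r₂) * z₁ + (A₁ + r₁) * z₂) := by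
  intro z₁ z₂ hz₁ hz₂
  have h1 : 0 < A₁ + z₁ := by linarith
  have h2 : 0 < A₂ + z₂ := by linarith
  have H := main_ineq hω hr₁ hr₂ hA₁ hA₂ z₁ z₂ h1 h2
  unfold Phiq Dq Xq Vq at H
  norm_num at H
  subst hX₀
  set X₀ := A₁ * A₂ + r₁ * A₂ + r₂ * A₁ with hX₀def
  set X1 := (A₁ + z₁) * (A₂ + z₂) + r₁ * (A₂ + z₂) + r₂ * (A₁ + z₁) with hX1def
  have hX0 : 0 < X₀ := by positivity
  have hX1 : 0 < X1 := by positivity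
  have hY0 : 0 < ω * X₀ + r₁ * r₂ := by positivity
  have hY1 : 0 < ω * X1 + r₁ * r₂ := by positivity
  have hden1 : 0 < 1 + r₁ / (A₁ + z₁) + r₂ / (A₂ + z₂) := by positivity
  have hden0 : 0 < 1 + r₁ / A₁ + r₂ / A₂ := by positivity
  have e1 : ω + (r₁ * r₂ / ((A₁ + z₁) * (A₂ + z₂))) /
      (1 + r₁ / (A₁ + z₁) + r₂ / (A₂ + z₂)) = (ω * X1 + r₁ * r₂) / X1 := by
    rw [hX1def]
    field_simp
  have e0 : ω + (r₁ * r₂ / (A₁ * A₂)) / (1 + r₁ / A₁ + r₂ / A₂)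
      = (ω * X₀ + r₁ * r₂) / X₀ := by
    rw [hX₀def]
    field_simp
  rw [e1, e0, Real.log_div hY1.ne' hX1.ne', Real.log_div hY0.ne' hX0.ne']
  have ecoef : (1 / X₀ - 1 / (X₀ + r₁ * r₂ / ω)) * ((A₂ + r₂) * z₁ + (A₁ + r₁) * z₂)
      = -((ω / (ω * X₀ + r₁ * r₂) - X₀⁻¹) * (z₁ * A₂ + A₁ * z₂ + r₁ * z₂ + r₂ * z₁)) := by
    have hXw : 0 < X₀ + r₁ * r₂ / ω := by positivity
    field_simp
    ring
  rw [ecoef]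
  linarith [H]
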